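/- For any nonzero equilibrium r ∈ E, there exists a critical member k* such that r_j ≤ 0 ≤ r_i, −u_j ≤ r_j, and u_i + r_i ≤ u_j + r_j for all i < k* ≤ j, and the total transfer satisfies T(r) = ∑_{i<k*} r_i = ∑_{j≥k*} (−r_j). -/

import Mathlib

open Finset

/-- `r ∈ S₀`: `r` is zero-sum and `∑_{i∈C}(u_i + r_i) ≥ 0` for every coalition `C`
with `|C| ≥ ĸ̂ = I - κ + 1` (characterization of stable promises contingent on the reform). -/
def inS0 {I : ℕ} (κ : ℕ) (u r : Fin I → ℝ) : Prop :=
  (∑ i, r i = 0) ∧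
  ∀ C : Finset (Fin I), I - κ + 1 ≤ C.card → 0 ≤ ∑ i ∈ C, (u i + r i)

/-- Total promises transfer `T(r) = (1/2) ∑_i |r_i|`. -/
noncomputable def totT {I : ℕ} (r : Fin I → ℝ) : ℝ := (∑ i, |r i|) / 2

/-- `r ∈ E`: `r` is stable and minimizes the total transfer over `S₀`. -/
def inE {I : ℕ} (κ : ℕ) (u r : Fin I → ℝ) : Prop :=
  inS0 κ u r ∧ ∀ r' : Fin I → ℝ, inS0 κ u r' → totT r ≤ totT r'

noncomputable def pert {I : ℕ} (r : Fin I → ℝ) (a b : Fin I) (ε : ℝ) : Fin I → ℝ :=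
  fun i => r i + (if i = b then ε else 0) - (if i = a then ε else 0)

lemma pert_a {I : ℕ} (r : Fin I → ℝ) {a b : Fin I} (hab : a ≠ b) (ε : ℝ) :
    pert r a b ε a = r a - ε := by simp [pert, hab]

lemma pert_b {I : ℕ} (r : Fin I → ℝ) {a b : Fin I} (hab : a ≠ b) (ε : ℝ) :
    pert r a b ε b = r b + ε := by simp [pert, hab.symm]

lemma pert_other {I : ℕ} (r : Fin I → ℝ) {a b i : Fin I} (hia : i ≠ a) (hib : i ≠ b) (ε : ℝ) :
    pert r a b ε i = r i := by simp [pert, hia, hib]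

lemma pert_sum {I : ℕ} (r : Fin I → ℝ) {a b : Fin I} (ε : ℝ)
    (C : Finset (Fin I)) :
    ∑ i ∈ C, pert r a b ε i
      = ∑ i ∈ C, r i + (if b ∈ C then ε else 0) - (if a ∈ C then ε else 0) := by
  simp [pert, Finset.sum_add_distrib, Finset.sum_sub_distrib, Finset.sum_ite_eq']

lemma swap_bound {I κ : ℕ} {u r : Fin I → ℝ} (hr : inS0 κ u r) {a b : Fin I} (hab : a ≠ b)
    {C : Finset (Fin I)} (hC : I - κ + 1 ≤ C.card) (haC : a ∈ C) (hbC : b ∉ C) :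
    (u a + r a) - (u b + r b) ≤ ∑ i ∈ C, (u i + r i) := by
  have hbe : b ∉ C.erase a := fun h => hbC (Finset.mem_of_mem_erase h)
  have hcard : (insert b (C.erase a)).card = C.card := by
    rw [Finset.card_insert_of_notMem hbe, Finset.card_erase_of_mem haC]
    have : 1 ≤ C.card := Finset.card_pos.mpr ⟨a, haC⟩
    omega
  have h2 := hr.2 (insert b (C.erase a)) (by omega)
  rw [Finset.sum_insert hbe, Finset.sum_erase_eq_sub haC] at h2
  linarith

lemma pert_inS0 {I κ : ℕ} {u r : Fin I → ℝ} (hr : inS0 κ u r) {a b : Fin I} (hab : a ≠ b)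
    {ε : ℝ} (hε : 0 ≤ ε)
    (hgap : ∀ C : Finset (Fin I), I - κ + 1 ≤ C.card → a ∈ C → b ∉ C →
      ε ≤ ∑ i ∈ C, (u i + r i)) :
    inS0 κ u (pert r a b ε) := by
  constructor
  · rw [pert_sum]
    simp [hr.1]
  · intro C hC
    have hvsum : ∑ i ∈ C, (u i + pert r a b ε i)
        = ∑ i ∈ C, (u i + r i) + (if b ∈ C then ε else 0) - (if a ∈ C then ε else 0) := by
      rw [Finset.sum_add_distrib, Finset.sum_add_distrib, pert_sum]
      ring
    rw [hvsum]
    by_cases haC : a ∈ C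
    · by_cases hbC : b ∈ C
      · simpa [haC, hbC] using hr.2 C hC
      · have := hgap C hC haC hbC
        simp only [haC, hbC, if_true, if_false]
        linarith
    · have := hr.2 C hC
      by_cases hbC : b ∈ C <;> simp [haC, hbC] <;> linarith

lemma pert_abs_sum {I : ℕ} (r : Fin I → ℝ) {a b : Fin I} (hab : a ≠ b) (ε : ℝ) :
    ∑ i, |pert r a b ε i| = ∑ i, |r i| - |r a| - |r b| + |r a - ε| + |r b + ε| := by
  have key : ∑ i, (|pert r a b ε i| - |r i|)
      = (|pert r a b ε a| - |r a|) + (|pert r a b ε b| - |r b|) := by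
    rw [Finset.sum_eq_add_of_mem a b (Finset.mem_univ a) (Finset.mem_univ b) hab]
    intro c _ hc
    rw [pert_other r hc.1 hc.2]
    ring
  rw [Finset.sum_sub_distrib] at key
  rw [pert_a r hab, pert_b r hab] at key
  linarith

/-- F1: exchange lemma; a promisee's outcome is at most any promiser's outcome. -/
lemma F1 {I κ : ℕ} {u r : Fin I → ℝ} (hr : inE κ u r) {a b : Fin I}
    (ha : 0 < r a) (hb : r b < 0) : u a + r a ≤ u b + r b := by
  by_contra hlt
  push_neg at hlt
  have hab : a ≠ b := fun h => by rw [h] at ha; linarith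
  set ε := min (min (r a) (-r b)) ((u a + r a) - (u b + r b)) with hεdef
  have hε0 : 0 < ε := by
    apply lt_min (lt_min ha (by linarith)) (by linarith)
  have hεa : ε ≤ r a := le_trans (min_le_left _ _) (min_le_left _ _)
  have hεb : ε ≤ -r b := le_trans (min_le_left _ _) (min_le_right _ _)
  have hεg : ε ≤ (u a + r a) - (u b + r b) := min_le_right _ _
  have hS : inS0 κ u (pert r a b ε) := by
    refine pert_inS0 hr.1 hab hε0.le ?_
    intro C hC haC hbC
    exact le_trans hεg (swap_bound hr.1 hab hC haC hbC)
  have habs : ∑ i, |pert r a b ε i| = ∑ i, |r i| - 2*ε := by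
    rw [pert_abs_sum r hab]
    rw [abs_of_pos ha, abs_of_neg hb, abs_of_nonneg (by linarith), abs_of_nonpos (by linarith)]
    ring
  have := hr.2 _ hS
  rw [totT, totT, habs] at this
  linarith

/-- F2: promisees come before promisers. -/
lemma F2 {I κ : ℕ} {u r : Fin I → ℝ} (hmono : Monotone u) (hr : inE κ u r) {a b : Fin I}
    (ha : 0 < r a) (hb : r b < 0) : a < b := by
  by_contra h
  push_neg at h
  have hab : b ≠ a := fun hh => by rw [hh] at hb; linarith
  have hba : b < a := lt_of_le_of_ne h hab
  have := F1 hr ha hb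
  have := hmono hba.le
  linarith

/-- F3: promisers keep a nonnegative outcome. -/
lemma F3 {I κ : ℕ} {u r : Fin I → ℝ} (hr : inE κ u r) {a b : Fin I}
    (ha : 0 < r a) (hb : r b < 0) : 0 ≤ u b + r b := by
  by_contra hlt
  push_neg at hlt
  have hab : a ≠ b := fun h => by rw [h] at ha; linarith
  classical
  set Cs : Finset (Finset (Fin I)) :=
    univ.powerset.filter (fun C => (I - κ + 1 ≤ C.card ∧ a ∈ C) ∧ b ∉ C) with hCs
  set s : Finset ℝ := insert (r a) (insert (-r b) (Cs.image (fun C => ∑ i ∈ C, (u i + r i)))) with hs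
  have hsne : s.Nonempty := ⟨r a, by simp [hs]⟩
  set ε := s.min' hsne with hε
  have hmem : ∀ x ∈ s, 0 < x := by
    intro x hx
    rw [hs] at hx
    simp only [Finset.mem_insert, Finset.mem_image] at hx
    rcases hx with rfl | rfl | ⟨C, hC, rfl⟩
    · exact ha
    · linarith
    · rw [hCs] at hC
      simp only [Finset.mem_filter] at hC
      obtain ⟨-, ⟨hcard, haC⟩, hbC⟩ := hC
      rcases lt_or_eq_of_le (hr.1.2 C hcard) with h | h
      · exact h
      · exfalso
        have hcard2 : I - κ + 1 ≤ (insert b C).card := by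
          rw [Finset.card_insert_of_notMem hbC]; omega
        have := hr.1.2 (insert b C) hcard2
        rw [Finset.sum_insert hbC, ← h] at this
        linarith
  have hε0 : 0 < ε := hmem _ (s.min'_mem hsne)
  have hεa : ε ≤ r a := s.min'_le _ (by simp [hs])
  have hεb : ε ≤ -r b := s.min'_le _ (by simp [hs])
  have hS : inS0 κ u (pert r a b ε) := by
    refine pert_inS0 hr.1 hab hε0.le ?_
    intro C hC haC hbC
    apply s.min'_le
    rw [hs]
    simp only [Finset.mem_insert, Finset.mem_image]
    exact Or.inr (Or.inr ⟨C, by simp [hCs, haC, hbC, hC]; omega, rfl⟩)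
  have habs : ∑ i, |pert r a b ε i| = ∑ i, |r i| - 2*ε := by
    rw [pert_abs_sum r hab]
    rw [abs_of_pos ha, abs_of_neg hb, abs_of_nonneg (by linarith), abs_of_nonpos (by linarith)]
    ring
  have := hr.2 _ hS
  rw [totT, totT, habs] at this
  linarith

/-- Transfer-neutral move stays in E. -/
lemma move_inE {I κ : ℕ} {u r : Fin I → ℝ} (hr : inE κ u r) {a b : Fin I} (hab : a ≠ b)
    {ε : ℝ} (hε : 0 ≤ ε) (hgap : ε ≤ (u a + r a) - (u b + r b))
    (habs : |r a - ε| + |r b + ε| = |r a| + |r b|) :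
    inE κ u (pert r a b ε) := by
  have hS : inS0 κ u (pert r a b ε) := by
    refine pert_inS0 hr.1 hab hε ?_
    intro C hC haC hbC
    exact le_trans hgap (swap_bound hr.1 hab hC haC hbC)
  refine ⟨hS, fun r' hr' => ?_⟩
  have hT : totT (pert r a b ε) = totT r := by
    rw [totT, totT, pert_abs_sum r hab]
    rw [show ∑ i, |r i| - |r a| - |r b| + |r a - ε| + |r b + ε|
        = ∑ i, |r i| + ((|r a - ε| + |r b + ε|) - (|r a| + |r b|)) by ring, habs]
    ring_nf
  rw [hT]
  exact hr.2 r' hr'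

lemma exists_pos {I : ℕ} {r : Fin I → ℝ} (hsum : ∑ i, r i = 0) {b : Fin I} (hb : r b < 0) :
    ∃ a, 0 < r a := by
  by_contra h
  push_neg at h
  have : ∑ i, r i < ∑ _i : Fin I, (0:ℝ) :=
    Finset.sum_lt_sum (fun i _ => h i) ⟨b, Finset.mem_univ b, hb⟩
  simp [hsum] at this

/-- F4: a zero member after a promiser dominates all promisees' outcomes. -/
lemma F4 {I κ : ℕ} {u r : Fin I → ℝ} (hmono : Monotone u) (hr : inE κ u r)
    {p z n : Fin I} (hp : 0 < r p) (hz : r z = 0) (hn : r n < 0) (hnz : n < z) :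
    u p + r p ≤ u z := by
  by_contra hlt
  push_neg at hlt
  have hpz : p ≠ z := fun h => by rw [h, hz] at hp; linarith
  set ε := min (r p) ((u p + r p) - u z) with hεdef
  have hε0 : 0 < ε := lt_min hp (by linarith)
  have hεp : ε ≤ r p := min_le_left _ _
  have hεg : ε ≤ (u p + r p) - (u z + r z) := by
    have h := min_le_right (r p) ((u p + r p) - u z)
    rw [hz]; rw [hεdef]; linarith
  have habs : |r p - ε| + |r z + ε| = |r p| + |r z| := by
    rw [hz]
    simp only [zero_add, abs_zero]
    rw [abs_of_pos hp, abs_of_nonneg (by linarith : 0 ≤ r p - ε), abs_of_nonneg hε0.le]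
    ring
  have hE' := move_inE hr hpz hε0.le hεg habs
  have hz' : 0 < pert r p z ε z := by rw [pert_b r hpz, hz]; linarith
  have hnp : n ≠ p := fun h => by rw [h] at hn; linarith
  have hnz' : n ≠ z := fun h => by rw [h, hz] at hn; linarith
  have hn' : pert r p z ε n < 0 := by rw [pert_other r hnp hnz']; exact hn
  have := F2 hmono hE' hz' hn'
  exact absurd this (not_lt.mpr hnz.le)

/-- F5: a zero member before a promisee is dominated by all promisers' outcomes. -/
lemma F5 {I κ : ℕ} {u r : Fin I → ℝ} (hmono : Monotone u) (hr : inE κ u r)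
    {p z n : Fin I} (hp : 0 < r p) (hz : r z = 0) (hn : r n < 0) (hzp : z < p) :
    u z ≤ u n + r n := by
  by_contra hlt
  push_neg at hlt
  have hzn : z ≠ n := fun h => by rw [h] at hz; linarith
  set ε := min (-r n) (u z - (u n + r n)) with hεdef
  have hε0 : 0 < ε := lt_min (by linarith) (by linarith)
  have hεn : ε ≤ -r n := min_le_left _ _
  have hεg : ε ≤ (u z + r z) - (u n + r n) := by
    have h := min_le_right (-r n) (u z - (u n + r n))
    rw [hz]; rw [hεdef]; linarith
  have habs : |r z - ε| + |r n + ε| = |r z| + |r n| := by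
    rw [hz]
    simp only [zero_sub, abs_zero, abs_neg]
    rw [abs_of_neg hn, abs_of_nonpos (by linarith : r n + ε ≤ 0), abs_of_nonneg hε0.le]
    ring
  have hE' := move_inE hr hzn hε0.le hεg habs
  have hpz : p ≠ z := fun h => by rw [h, hz] at hp; linarith
  have hpn : p ≠ n := fun h => by rw [h] at hp; linarith
  have hp' : 0 < pert r z n ε p := by rw [pert_other r hpz hpn]; exact hp
  have hz' : pert r z n ε z < 0 := by rw [pert_a r hzn, hz]; linarith
  have := F2 hmono hE' hp' hz'
  exact absurd this (not_lt.mpr hzp.le)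

/-- F6: a zero member that is "not low" must be "high". -/
lemma F6 {I κ : ℕ} {u r : Fin I → ℝ} (hr : inE κ u r)
    {z n : Fin I} (hz : r z = 0) (hn : r n < 0) (hlt : u n + r n < u z) :
    0 ≤ u z ∧ ∀ p, 0 < r p → u p + r p ≤ u z := by
  have hzn : z ≠ n := fun h => by rw [h] at hz; linarith
  set ε := min (-r n) (u z - (u n + r n)) with hεdef
  have hε0 : 0 < ε := lt_min (by linarith) (by linarith)
  have hεn : ε ≤ -r n := min_le_left _ _
  have hεg : ε ≤ (u z + r z) - (u n + r n) := by
    have h := min_le_right (-r n) (u z - (u n + r n))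
    rw [hz]; rw [hεdef]; linarith
  have habs : |r z - ε| + |r n + ε| = |r z| + |r n| := by
    rw [hz]
    simp only [zero_sub, abs_zero, abs_neg]
    rw [abs_of_neg hn, abs_of_nonpos (by linarith : r n + ε ≤ 0), abs_of_nonneg hε0.le]
    ring
  have hE' := move_inE hr hzn hε0.le hεg habs
  have hz' : pert r z n ε z < 0 := by rw [pert_a r hzn, hz]; linarith
  obtain ⟨a, ha⟩ := exists_pos hr.1.1 hn
  have haz : a ≠ z := fun h => by rw [h, hz] at ha; linarith
  have han : a ≠ n := fun h => by rw [h] at ha; linarith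
  have ha' : 0 < pert r z n ε a := by rw [pert_other r haz han]; exact ha
  have h3 := F3 hE' ha' hz'
  rw [pert_a r hzn, hz] at h3
  constructor
  · linarith
  · intro p hp
    have hpz : p ≠ z := fun h => by rw [h, hz] at hp; linarith
    have hpn : p ≠ n := fun h => by rw [h] at hp; linarith
    have hp' : 0 < pert r z n ε p := by rw [pert_other r hpz hpn]; exact hp
    have h1 := F1 hE' hp' hz'
    rw [pert_other r hpz hpn, pert_a r hzn, hz] at h1
    linarith

/-- push toward equality. For any nonzero equilibrium there is a
critical member `k*` separating promisees (below) from promisers (above), and the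
total transfer equals the aggregate flow across `k*`. -/
theorem push_toward_equality {I : ℕ} (κ : ℕ) (hκ : 1 ≤ κ) (hκI : κ ≤ I)
    (u : Fin I → ℝ) (hmono : Monotone u) (hu : 0 < ∑ i, u i)
    (r : Fin I → ℝ) (hr : inE κ u r) (hrne : r ≠ 0) :
    ∃ k : Fin I,
      (∀ i : Fin I, i < k → 0 ≤ r i) ∧
      (∀ j : Fin I, k ≤ j → -u j ≤ r j ∧ r j ≤ 0) ∧
      (∀ i j : Fin I, i < k → k ≤ j → u i + r i ≤ u j + r j) ∧
      totT r = ∑ i ∈ univ.filter (fun i => i < k), r i ∧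
      totT r = ∑ j ∈ univ.filter (fun j => k ≤ j), (-r j) := by
  classical
  have hsum : ∑ i, r i = 0 := hr.1.1
  -- a negative entry exists
  have hexneg : ∃ n, r n < 0 := by
    by_contra h
    push_neg at h
    have hne : ∃ i, r i ≠ 0 := by
      by_contra h2
      push_neg at h2
      exact hrne (funext h2)
    obtain ⟨i0, hi0⟩ := hne
    have hi0' : 0 < r i0 := lt_of_le_of_ne (h i0) (Ne.symm hi0)
    have : ∑ _i : Fin I, (0:ℝ) < ∑ i, r i :=
      Finset.sum_lt_sum (fun i _ => h i) ⟨i0, Finset.mem_univ i0, hi0'⟩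
    simp [hsum] at this
  obtain ⟨n0, hn0⟩ := hexneg
  obtain ⟨p0, hp0⟩ := exists_pos hsum hn0
  -- the "high" predicate
  set high : Fin I → Prop := fun z => 0 ≤ u z ∧ ∀ p, 0 < r p → u p + r p ≤ u z with hhigh
  set B : Finset (Fin I) := univ.filter (fun i => 0 < r i ∨ (r i = 0 ∧ ¬ high i)) with hB
  have hBne : B.Nonempty := ⟨p0, by simp [hB, hp0]⟩
  set m : Fin I := B.max' hBne with hm
  -- every member of B is below every promiser
  have hkey : ∀ b ∈ B, ∀ n : Fin I, r n < 0 → b < n := by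
    intro b hb n hn
    rw [hB, Finset.mem_filter] at hb
    rcases hb.2 with hbp | ⟨hbz, hbh⟩
    · exact F2 hmono hr hbp hn
    · by_contra hnb
      push_neg at hnb
      have hbn : b ≠ n := fun h => by rw [h] at hbz; linarith
      have hnb' : n < b := lt_of_le_of_ne hnb (fun h => hbn h.symm)
      apply hbh
      constructor
      · have h3 : 0 ≤ u n + r n := F3 hr hp0 hn
        have := hmono hnb'.le
        linarith
      · intro p hp
        exact F4 hmono hr hp hbz hn hnb'
  have hmlt : ∀ n : Fin I, r n < 0 → m < n := fun n hn => hkey m (B.max'_mem hBne) n hn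
  have hmn0 : m < n0 := hmlt n0 hn0
  have hk : (m : ℕ) + 1 < I := by
    have h1 : (m : ℕ) < (n0 : ℕ) := hmn0
    have h2 : (n0 : ℕ) < I := n0.isLt
    omega
  set k : Fin I := ⟨(m : ℕ) + 1, hk⟩ with hkdef
  have hlt_k : ∀ i : Fin I, i < k ↔ i ≤ m := by
    intro i
    rw [Fin.lt_def, Fin.le_def]
    simp only [hkdef]
    omega
  have hk_le : ∀ j : Fin I, k ≤ j ↔ m < j := by
    intro j
    rw [Fin.le_def, Fin.lt_def]
    simp only [hkdef]
    omega
  have hnotB : ∀ j : Fin I, m < j → ¬(0 < r j ∨ (r j = 0 ∧ ¬ high j)) := by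
    intro j hj hcon
    have : j ≤ m := B.le_max' j (by rw [hB, Finset.mem_filter]; exact ⟨Finset.mem_univ j, hcon⟩)
    exact absurd hj (not_lt.mpr this)
  have part1 : ∀ i : Fin I, i ≤ m → 0 ≤ r i := by
    intro i hi
    by_contra h
    push_neg at h
    exact absurd hi (not_le.mpr (hmlt i h))
  have part2a : ∀ j : Fin I, m < j → r j ≤ 0 := by
    intro j hj
    by_contra h
    push_neg at h
    exact hnotB j hj (Or.inl h)
  have parthigh : ∀ j : Fin I, m < j → r j = 0 → high j := by
    intro j hj hz
    by_contra h
    exact hnotB j hj (Or.inr ⟨hz, h⟩)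
  have part2b : ∀ j : Fin I, m < j → 0 ≤ u j + r j := by
    intro j hj
    rcases lt_or_eq_of_le (part2a j hj) with h | h
    · exact F3 hr hp0 h
    · have := (parthigh j hj h).1
      rw [h]
      linarith
  have part3 : ∀ i j : Fin I, i ≤ m → m < j → u i + r i ≤ u j + r j := by
    intro i j hi hj
    have hij : i < j := lt_of_le_of_lt hi hj
    rcases lt_or_eq_of_le (part1 i hi) with hip | hiz
    · rcases lt_or_eq_of_le (part2a j hj) with hjn | hjz
      · exact F1 hr hip hjn
      · have hh := (parthigh j hj hjz).2 i hip
        rw [hjz]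
        linarith
    · rcases lt_or_eq_of_le (part2a j hj) with hjn | hjz
      · -- r i = 0, r j < 0
        by_contra hlt
        push_neg at hlt
        rw [← hiz] at hlt
        have hlt' : u j + r j < u i := by linarith
        have hhi := F6 hr hiz.symm hjn hlt'
        have hmB' : m ∈ B := B.max'_mem hBne
        rw [hB, Finset.mem_filter] at hmB'
        rcases hmB'.2 with hmp | ⟨hmz, hmh⟩
        · have him : i ≠ m := fun h => by rw [← h] at hmp; rw [← hiz] at hmp; exact lt_irrefl _ hmp
          have := F5 hmono hr hmp hiz.symm hjn (lt_of_le_of_ne hi him)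
          linarith
        · rcases eq_or_lt_of_le hi with h | h
          · exact hmh (h ▸ hhi)
          · apply hmh
            have hum : u i ≤ u m := hmono h.le
            exact ⟨le_trans hhi.1 hum, fun p hp => le_trans (hhi.2 p hp) hum⟩
      · rw [← hiz, hjz]
        have := hmono hij.le
        linarith
  have hfilter_le : univ.filter (fun j : Fin I => k ≤ j) = univ.filter (fun j => ¬ j < k) :=
    Finset.filter_congr fun j _ => not_lt.symm
  have hA := Finset.sum_filter_add_sum_filter_not univ (fun i : Fin I => i < k) r
  have hAbs := Finset.sum_filter_add_sum_filter_not univ (fun i : Fin I => i < k) (fun i => |r i|)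
  have h1 : ∑ i ∈ univ.filter (fun i : Fin I => i < k), |r i|
      = ∑ i ∈ univ.filter (fun i : Fin I => i < k), r i := by
    refine Finset.sum_congr rfl fun i hi => ?_
    rw [Finset.mem_filter] at hi
    exact abs_of_nonneg (part1 i ((hlt_k i).mp hi.2))
  have h2 : ∑ i ∈ univ.filter (fun i : Fin I => ¬ i < k), |r i|
      = ∑ i ∈ univ.filter (fun i : Fin I => ¬ i < k), (- r i) := by
    refine Finset.sum_congr rfl fun i hi => ?_
    rw [Finset.mem_filter] at hi
    have : m < i := (hk_le i).mp (not_lt.mp hi.2)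
    exact abs_of_nonpos (part2a i this)
  rw [hsum] at hA
  have hsumneg : ∑ i ∈ univ.filter (fun i : Fin I => ¬ i < k), (- r i)
      = - ∑ i ∈ univ.filter (fun i : Fin I => ¬ i < k), r i := by
    rw [Finset.sum_neg_distrib]
  refine ⟨k, ?_, ?_, ?_, ?_, ?_⟩
  · intro i hik
    exact part1 i ((hlt_k i).mp hik)
  · intro j hkj
    have hj := (hk_le j).mp hkj
    exact ⟨by have := part2b j hj; linarith, part2a j hj⟩
  · intro i j hik hkj
    exact part3 i j ((hlt_k i).mp hik) ((hk_le j).mp hkj)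
  · rw [totT]
    rw [← hAbs, h1, h2, hsumneg]
    linarith
  · rw [totT, hfilter_le]
    rw [← hAbs, h1, h2, hsumneg]
    linarith
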